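/- Let G be a group and let K₁/L₁ and K₂/L₂ be associated chief factors of G. Then the centralizer in G of the factor K₁/L₁ equals the centralizer in G of the factor K₂/L₂, i.e., {g ∈ G : [K₁, g] ⊆ L₁} = {g ∈ G : [K₂, g] ⊆ L₂}. -/

import Mathlib

open Pointwise
open scoped commutatorElement


/-- `K/L` is a chief factor of `G`. -/
def ChiefFactor (G : Type*) [Group G] (K L : Subgroup G) : Prop :=
  K.Normal ∧ L.Normal ∧ L < K ∧ ∀ M : Subgroup G, M.Normal → L < M → M < K → False

private lemma aux_centralizer {G : Type*} [Group G] (K₁ L₁ K₂ L₂ : Subgroup G)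
    (hK₂ : K₂.Normal) (hL₂ : L₂.Normal)
    (ha₁ : K₁ ⊔ L₂ = K₂ ⊔ L₁) (ha₃ : K₂ ⊓ (L₁ ⊔ L₂) = L₂)
    (g : G) (hg : ∀ k ∈ K₁, ⁅k, g⁆ ∈ L₁) : ∀ k ∈ K₂, ⁅k, g⁆ ∈ L₂ := by
  intro k hk
  have hk' : k ∈ K₁ ⊔ L₂ := by
    rw [ha₁]; exact (le_sup_left : K₂ ≤ K₂ ⊔ L₁) hk
  have hk'' : k ∈ (↑(K₁ ⊔ L₂) : Set G) := hk'
  rw [Subgroup.mul_normal K₁ L₂] at hk''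
  obtain ⟨a, ha, b, hb, rfl⟩ := hk''
  have h1 : ⁅a, g⁆ ∈ L₁ := hg a ha
  have h2 : ⁅b, g⁆ ∈ L₂ := by
    rw [commutatorElement_def]
    have : g * b⁻¹ * g⁻¹ ∈ L₂ := by
      have := hL₂.conj_mem b⁻¹ (inv_mem hb) g
      simpa [mul_assoc] using this
    simpa [mul_assoc] using mul_mem hb this
  have hdec : ⁅a * b, g⁆ = a * ⁅b, g⁆ * a⁻¹ * ⁅a, g⁆ := by
    simp only [commutatorElement_def]; group
  have hmem1 : ⁅a * b, g⁆ ∈ L₁ ⊔ L₂ := by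
    rw [hdec]
    exact mul_mem ((le_sup_right : L₂ ≤ L₁ ⊔ L₂) (hL₂.conj_mem _ h2 a))
      ((le_sup_left : L₁ ≤ L₁ ⊔ L₂) h1)
  have hmem2 : ⁅a * b, g⁆ ∈ K₂ := by
    rw [commutatorElement_def]
    have : g * (a * b)⁻¹ * g⁻¹ ∈ K₂ := by
      have := hK₂.conj_mem (a * b)⁻¹ (inv_mem hk) g
      simpa [mul_assoc] using this
    simpa [mul_assoc] using mul_mem hk this
  rw [← ha₃]
  exact ⟨hmem2, hmem1⟩

/-- Associated chief factors have the same centralizer: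
`{g : [K₁,g] ⊆ L₁} = {g : [K₂,g] ⊆ L₂}`. -/
theorem associated_chieffactors_centralizer_eq (G : Type*) [Group G]
    (K₁ L₁ K₂ L₂ : Subgroup G)
    (h₁ : ChiefFactor G K₁ L₁) (h₂ : ChiefFactor G K₂ L₂)
    (ha₁ : K₁ ⊔ L₂ = K₂ ⊔ L₁)
    (ha₂ : K₁ ⊓ (L₁ ⊔ L₂) = L₁) (ha₃ : K₂ ⊓ (L₁ ⊔ L₂) = L₂) :
    {g : G | ∀ k ∈ K₁, ⁅k, g⁆ ∈ L₁} = {g : G | ∀ k ∈ K₂, ⁅k, g⁆ ∈ L₂} := by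
  ext g
  constructor
  · exact fun hg => aux_centralizer K₁ L₁ K₂ L₂ h₂.1 h₂.2.1 ha₁ ha₃ g hg
  · refine fun hg => aux_centralizer K₂ L₂ K₁ L₁ h₁.1 h₁.2.1 ?_ ?_ g hg
    · exact ha₁.symm
    · rw [sup_comm L₂ L₁]; exact ha₂
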